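/- Let X be an m×r matrix and Θ a family of n×r binary support matrices. If (X,Y) is the PS-unique factorization of XYᵀ in {X} × Σ_Θ (where Σ_Θ is the union over S ∈ Θ of the fixed-support model sets), then colsupp(Y) ⊆ colsupp(X). -/

import Mathlib

open Matrix

def IsGenPerm {r : ℕ} (G : Matrix (Fin r) (Fin r) ℂ) : Prop :=
  ∃ (σ : Equiv.Perm (Fin r)) (d : Fin r → ℂ),
    (∀ i, d i ≠ 0) ∧ ∀ i j, G i j = if i = σ j then d i else 0

def PSEquiv {m n r : ℕ}
    (p q : Matrix (Fin m) (Fin r) ℂ × Matrix (Fin n) (Fin r) ℂ) : Prop :=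
  ∃ G, IsGenPerm G ∧ q.1 = p.1 * G ∧ q.2 = p.2 * (G⁻¹)ᵀ

def PSUniqueSet {m n r : ℕ}
    (Sig : Set (Matrix (Fin m) (Fin r) ℂ × Matrix (Fin n) (Fin r) ℂ)) :
    Set (Matrix (Fin m) (Fin r) ℂ × Matrix (Fin n) (Fin r) ℂ) :=
  {p | p ∈ Sig ∧ ∀ q ∈ Sig, q.1 * q.2ᵀ = p.1 * p.2ᵀ → PSEquiv p q}

/-- The support of a matrix is contained in the (binary) support `S`. -/
def SuppSub {a b : ℕ} (X : Matrix (Fin a) (Fin b) ℂ) (S : Set (Fin a × Fin b)) : Prop :=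
  ∀ i j, X i j ≠ 0 → (i, j) ∈ S

/-- The column support of a matrix: indices of its nonzero columns. -/
def Colsupp {a b : ℕ} (X : Matrix (Fin a) (Fin b) ℂ) : Set (Fin b) :=
  {j | ∃ i, X i j ≠ 0}

/-- The column support of a support (set of index pairs). -/
def ColsuppS {a b : ℕ} (S : Set (Fin a × Fin b)) : Set (Fin b) :=
  {j | ∃ i, (i, j) ∈ S}

/-- The constraint set Σ_Ω associated with a family of pairs of supports. -/
def SigmaOm {m n r : ℕ} (Om : Set (Set (Fin m × Fin r) × Set (Fin n × Fin r))) :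
    Set (Matrix (Fin m) (Fin r) ℂ × Matrix (Fin n) (Fin r) ℂ) :=
  {p | ∃ S ∈ Om, SuppSub p.1 S.1 ∧ SuppSub p.2 S.2}

/-- The constraint set Σ_Θ for a family of right supports. -/
def SigmaTh {n r : ℕ} (Th : Set (Set (Fin n × Fin r))) :
    Set (Matrix (Fin n) (Fin r) ℂ) :=
  {Y | ∃ S ∈ Th, SuppSub Y S}



lemma genperm_inv_apply {r : ℕ} (G : Matrix (Fin r) (Fin r) ℂ)
    (σ : Equiv.Perm (Fin r)) (d : Fin r → ℂ) (hd : ∀ i, d i ≠ 0)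
    (hG : ∀ i j, G i j = if i = σ j then d i else 0) :
    G⁻¹ = Matrix.of (fun j k => if k = σ j then (d k)⁻¹ else 0) := by
  apply Matrix.inv_eq_left_inv
  ext j k
  simp only [Matrix.mul_apply, Matrix.of_apply, hG, Matrix.one_apply]
  rw [Finset.sum_eq_single (σ j)]
  · simp only [if_pos rfl]
    rcases eq_or_ne j k with rfl | hne
    · simp [inv_mul_cancel₀ (hd (σ j))]
    · have : ¬ (σ j = σ k) := fun hc => hne (σ.injective hc)
      simp [this, hne]
  · intro b _ hb
    simp [if_neg hb]
  · simp


theorem stmt6 {m n r : ℕ} (Th : Set (Set (Fin n × Fin r)))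
    (X : Matrix (Fin m) (Fin r) ℂ) (Y : Matrix (Fin n) (Fin r) ℂ)
    (h : (X, Y) ∈ PSUniqueSet {p | p.1 = X ∧ p.2 ∈ SigmaTh Th}) :
    Colsupp Y ⊆ Colsupp X := by
  intro j hj
  by_contra hjX
  have hXj : ∀ i, X i j = 0 := by
    intro i
    by_contra hc
    exact hjX ⟨i, hc⟩
  -- Y' : zero out column j of Y
  set Y' : Matrix (Fin n) (Fin r) ℂ := Matrix.of (fun i k => if k = j then 0 else Y i k) with hY'
  have hmem : ((X, Y') : Matrix (Fin m) (Fin r) ℂ × Matrix (Fin n) (Fin r) ℂ) ∈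
      {p : Matrix (Fin m) (Fin r) ℂ × Matrix (Fin n) (Fin r) ℂ | p.1 = X ∧ p.2 ∈ SigmaTh Th} := by
    refine ⟨rfl, ?_⟩
    obtain ⟨-, ⟨S, hS, hsub⟩⟩ := h.1
    refine ⟨S, hS, fun i k hik => hsub i k ?_⟩
    intro hz
    exact hik (by simp only [hY']; simpa using fun _ => hz)
  have hprod : X * Y'ᵀ = X * Yᵀ := by
    ext a b
    simp only [Matrix.mul_apply, Matrix.transpose_apply, hY', Matrix.of_apply]
    apply Finset.sum_congr rfl
    intro k _
    rcases eq_or_ne k j with rfl | hk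
    · simp [hXj a]
    · simp [hk]
  obtain ⟨G, ⟨σ, d, hd, hG⟩, -, hY'eq⟩ := h.2 (X, Y') hmem hprod
  have hinv := genperm_inv_apply G σ d hd hG
  have hY'val : ∀ a i, Y' a i = Y a (σ i) * (d (σ i))⁻¹ := by
    intro a i
    have := congrFun (congrFun hY'eq a) i
    simp only [Matrix.mul_apply, Matrix.transpose_apply, hinv, Matrix.of_apply] at this
    rw [this, Finset.sum_eq_single (σ i)]
    · simp
    · intro b _ hb; simp [if_neg hb]
    · simp
  -- Colsupp Y' = σ ⁻¹' Colsupp Y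
  have h1 : Colsupp Y' = σ ⁻¹' (Colsupp Y) := by
    ext i
    simp only [Colsupp, Set.mem_setOf_eq, Set.mem_preimage]
    constructor
    · rintro ⟨a, ha⟩
      refine ⟨a, fun hc => ha ?_⟩
      rw [hY'val a i, hc, zero_mul]
    · rintro ⟨a, ha⟩
      exact ⟨a, by rw [hY'val a i]; exact mul_ne_zero ha (inv_ne_zero (hd _))⟩
  have h2 : Colsupp Y' = Colsupp Y \ {j} := by
    ext i
    simp only [Colsupp, Set.mem_setOf_eq, Set.mem_diff, Set.mem_singleton_iff, hY',
      Matrix.of_apply]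
    constructor
    · rintro ⟨a, ha⟩
      rcases eq_or_ne i j with rfl | hij
      · simp at ha
      · rw [if_neg hij] at ha
        exact ⟨⟨a, ha⟩, hij⟩
    · rintro ⟨⟨a, ha⟩, hij⟩
      exact ⟨a, by rwa [if_neg hij]⟩
  have hcard1 : (Colsupp Y').ncard = (Colsupp Y).ncard := by
    rw [h1, ← Equiv.image_symm_eq_preimage]
    exact Set.ncard_image_of_injective _ σ.symm.injective
  have hcard2 : (Colsupp Y').ncard < (Colsupp Y).ncard := by
    rw [h2]
    exact Set.ncard_diff_singleton_lt_of_mem hj (Set.toFinite _)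
  omega
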